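/- Define L g = ∑_{j=1}^{d} (-1)^{d-j} j^{d-1} ∑_{τ} g(a_j τ), where a_j = (1/j,...,1/j,0,...,0) ∈ ℝ^d has exactly j nonzero entries and the inner sum runs over all distinct permutations of a_j. Then L p = 0 for every polynomial p in d variables of total degree at most d-1. -/

import Mathlib

open Finset fwdDiff

lemma fwdDiff_iter_pow_eq_zero : ∀ e n : ℕ, e < n →
    (Δ_[1])^[n] (fun x : ℕ => (x:ℝ)^e) = 0 := by
  intro e
  induction e using Nat.strong_induction_on with
  | _ e IH =>
    intro n hn
    obtain ⟨m, rfl⟩ := Nat.exists_eq_add_of_lt hn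
    rw [show e + m + 1 = (e + m) + 1 by ring, Function.iterate_succ_apply]
    have h1 : (Δ_[1]) (fun x : ℕ => (x:ℝ)^e)
        = ∑ t ∈ range e, fun x : ℕ => ((e.choose t : ℝ)) * (x:ℝ)^t := by
      funext x
      simp only [fwdDiff, Finset.sum_apply]
      push_cast
      rw [add_pow]
      rw [Finset.sum_range_succ]
      simp [mul_comm]
    rw [h1, fwdDiff_iter_finset_sum]
    refine Finset.sum_eq_zero fun t ht => ?_
    have : (fun x : ℕ => ((e.choose t : ℝ)) * (x:ℝ)^t)
        = (e.choose t : ℝ) • (fun x : ℕ => (x:ℝ)^t) := by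
      funext x; simp
    rw [this, fwdDiff_iter_const_smul,
      IH t (Finset.mem_range.1 ht) (e + m) (lt_of_lt_of_le (Finset.mem_range.1 ht) (Nat.le_add_right e m))]
    simp

lemma alt_sum_choose_pow (n e m : ℕ) (he : e < n) :
    ∑ i ∈ range (n + 1), (-1:ℝ)^(n-i) * (n.choose i) * ((m + i : ℕ):ℝ)^e = 0 := by
  have := fwdDiff_iter_eq_sum_shift (M := ℕ) (G := ℝ) (h := 1)
    (fun x : ℕ => (x:ℝ)^e) n m
  rw [fwdDiff_iter_pow_eq_zero e n he] at this
  simp only [Pi.zero_apply, smul_eq_mul, zsmul_eq_mul, smul_eq_mul] at this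
  rw [this]
  refine (Finset.sum_congr rfl fun i _ => ?_).symm
  push_cast
  ring

lemma card_supersets {α : Type*} [DecidableEq α] [Fintype α] (t : Finset α) (j : ℕ)
    (h : t.card ≤ j) :
    ((Finset.univ.powersetCard j).filter (fun s => t ⊆ s)).card
      = (Fintype.card α - t.card).choose (j - t.card) := by
  rw [← Finset.card_compl t, ← Finset.card_powersetCard]
  apply Finset.card_nbij' (fun s => s \ t) (fun u => u ∪ t)
  · intro s hs
    simp only [Finset.mem_coe, Finset.mem_filter, Finset.mem_powersetCard] at hs
    obtain ⟨⟨-, hcard⟩, hts⟩ := hs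
    rw [Finset.mem_coe, Finset.mem_powersetCard]
    constructor
    · intro x hx
      simp only [Finset.mem_sdiff] at hx
      simp [hx.2]
    · rw [Finset.card_sdiff_of_subset hts, hcard]
  · intro u hu
    rw [Finset.mem_coe, Finset.mem_powersetCard] at hu
    obtain ⟨hsub, hcard⟩ := hu
    have hdisj : Disjoint u t := by
      rw [Finset.disjoint_left]
      intro x hx
      have := hsub hx
      simpa using this
    simp only [Finset.mem_coe, Finset.mem_filter, Finset.mem_powersetCard]
    refine ⟨⟨Finset.subset_univ _, ?_⟩, Finset.subset_union_right⟩
    rw [Finset.card_union_of_disjoint hdisj, hcard, Nat.sub_add_cancel h]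
  · intro s hs
    simp only [Finset.mem_coe, Finset.mem_filter] at hs
    exact Finset.sdiff_union_of_subset hs.2
  · intro u hu
    rw [Finset.mem_coe, Finset.mem_powersetCard] at hu
    apply Finset.union_sdiff_cancel_right
    rw [Finset.disjoint_left]
    intro x hx
    have := hu.1 hx
    simpa using this

lemma monomial_sum_zero (d : ℕ) (hd : 3 ≤ d) (α : Fin d →₀ ℕ)
    (hk : (α.sum fun _ e => e) ≤ d - 1) :
    ∑ j ∈ Finset.Icc 1 d, (-1:ℝ)^(d-j) * (j:ℝ)^(d-1) *
      ∑ s ∈ Finset.univ.powersetCard j, ∏ i, (if i ∈ s then 1/(j:ℝ) else 0) ^ α i = 0 := by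
  set k := (α.sum fun _ e => e) with hkdef
  set m := α.support.card with hmdef
  set N : ℕ → ℕ := fun j =>
    ((Finset.univ.powersetCard j).filter (fun s => α.support ⊆ s)).card with hN
  have hmk : m ≤ k := by
    rw [hkdef, Finsupp.sum, hmdef, Finset.card_eq_sum_ones]
    exact Finset.sum_le_sum fun i hi =>
      Nat.one_le_iff_ne_zero.2 (Finsupp.mem_support_iff.1 hi)
  -- Step 1: compute the inner sum over s
  have step1 : ∀ j : ℕ, ∑ s ∈ Finset.univ.powersetCard j,
      ∏ i, (if i ∈ s then 1/(j:ℝ) else 0) ^ α i = (N j : ℝ) * (1/(j:ℝ))^k := by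
    intro j
    have hprod : ∀ s : Finset (Fin d),
        ∏ i, (if i ∈ s then 1/(j:ℝ) else 0) ^ α i
          = if α.support ⊆ s then (1/(j:ℝ))^k else 0 := by
      intro s
      by_cases hsub : α.support ⊆ s
      · rw [if_pos hsub]
        rw [← Finset.prod_subset (Finset.subset_univ α.support)
          (fun i _ hi => by rw [Finsupp.notMem_support_iff.1 hi, pow_zero])]
        rw [Finset.prod_congr rfl (fun i hi => by rw [if_pos (hsub hi)])]
        rw [Finset.prod_pow_eq_pow_sum]
        rfl
      · rw [if_neg hsub]
        obtain ⟨i, hi, his⟩ := Finset.not_subset.1 hsub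
        refine Finset.prod_eq_zero (Finset.mem_univ i) ?_
        rw [if_neg his]
        exact zero_pow (Finsupp.mem_support_iff.1 hi)
    rw [Finset.sum_congr rfl fun s _ => hprod s, ← Finset.sum_filter,
      Finset.sum_const, nsmul_eq_mul]
  -- N j = 0 for j < m
  have hNzero : ∀ j, j < m → N j = 0 := by
    intro j hj
    rw [hN]
    rw [Finset.card_eq_zero, Finset.filter_eq_empty_iff]
    intro s hs
    rw [Finset.mem_powersetCard] at hs
    intro hsub
    exact absurd (hs.2 ▸ Finset.card_le_card hsub) (Nat.not_le.2 hj)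
  -- rewrite each term for j ≥ 1
  have step2 : ∀ j ∈ Finset.Icc 1 d,
      (-1:ℝ)^(d-j) * (j:ℝ)^(d-1) * ((N j : ℝ) * (1/(j:ℝ))^k)
        = (-1:ℝ)^(d-j) * (j:ℝ)^(d-1-k) * (N j : ℝ) := by
    intro j hj
    have hj1 : 1 ≤ j := (Finset.mem_Icc.1 hj).1
    have hjne : (j:ℝ) ≠ 0 := Nat.cast_ne_zero.2 (by omega)
    have hkd : k ≤ d - 1 := hk
    have : (j:ℝ)^(d-1) = (j:ℝ)^(d-1-k) * (j:ℝ)^k := by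
      rw [← pow_add, Nat.sub_add_cancel hkd]
    rw [this]
    field_simp
    rw [mul_comm, ← mul_assoc, ← mul_pow, one_div_mul_cancel hjne, one_pow, one_mul]
  have hstep : ∑ j ∈ Finset.Icc 1 d, (-1:ℝ)^(d-j) * (j:ℝ)^(d-1) *
      (∑ s ∈ Finset.univ.powersetCard j, ∏ i, (if i ∈ s then 1/(j:ℝ) else 0) ^ α i)
      = ∑ j ∈ Finset.Icc 1 d, (-1:ℝ)^(d-j) * (j:ℝ)^(d-1-k) * (N j : ℝ) :=
    Finset.sum_congr rfl fun j hj => by rw [step1 j]; exact step2 j hj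
  rw [hstep]
  -- extend to range (d+1) : the j = 0 term vanishes
  have hzero_term : (-1:ℝ)^(d-0) * ((0:ℕ):ℝ)^(d-1-k) * (N 0 : ℝ) = 0 := by
    by_cases hm : m = 0
    · have hsupp : α.support = ∅ := Finset.card_eq_zero.1 hm
      have hk0 : k = 0 := by rw [hkdef, Finsupp.sum, hsupp, Finset.sum_empty]
      rw [hk0, Nat.cast_zero, zero_pow (by omega : d - 1 - 0 ≠ 0)]
      ring
    · rw [hNzero 0 (by omega)]
      simp
  have hmd : m ≤ d := by omega
  have hIcc : Finset.Icc 1 d = Finset.Ico 1 (d+1) := by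
    ext x; simp [Nat.lt_succ_iff]
  rw [hIcc]
  have hext : ∑ j ∈ Finset.Ico 0 (d+1), (-1:ℝ)^(d-j) * (j:ℝ)^(d-1-k) * (N j : ℝ)
      = ∑ j ∈ Finset.Ico 1 (d+1), (-1:ℝ)^(d-j) * (j:ℝ)^(d-1-k) * (N j : ℝ) := by
    rw [Finset.sum_eq_sum_Ico_succ_bot (by omega : 0 < d + 1)]
    rw [show ((0:ℕ):ℝ) = (0:ℝ) by norm_num] at hzero_term ⊢
    rw [hzero_term, zero_add]
  rw [← hext]
  have hdrop : ∑ j ∈ Finset.Ico 0 (d+1), (-1:ℝ)^(d-j) * (j:ℝ)^(d-1-k) * (N j : ℝ)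
      = ∑ j ∈ Finset.Ico m (d+1), (-1:ℝ)^(d-j) * (j:ℝ)^(d-1-k) * (N j : ℝ) := by
    refine (Finset.sum_subset (Finset.Ico_subset_Ico (by omega) le_rfl) ?_).symm
    intro j hj hj'
    simp only [Finset.mem_Ico] at hj hj'
    rw [hNzero j (by omega)]
    simp
  rw [hdrop, Finset.sum_Ico_eq_sum_range]
  have hNval : ∀ i, N (m + i) = (d - m).choose i := by
    intro i
    have h2 := card_supersets (α := Fin d) α.support (m + i) (by omega)
    rw [Fintype.card_fin, ← hmdef, Nat.add_sub_cancel_left] at h2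
    exact h2
  have halt := alt_sum_choose_pow (d - m) (d - 1 - k) m (by omega)
  rw [show d + 1 - m = (d - m) + 1 by omega]
  rw [← halt]
  refine Finset.sum_congr rfl fun i _ => ?_
  rw [hNval i, show d - (m + i) = (d - m) - i by omega]
  push_cast
  ring

/-- The functional `L g = ∑_{j=1}^{d} (-1)^{d-j} j^{d-1} ∑_τ g(a_j τ)`, where
`a_j = (1/j,…,1/j,0,…,0)` has exactly `j` nonzero entries and the inner sum runs over
all distinct permutations of `a_j` (equivalently over the `j`-element subsets of the
coordinates), annihilates every polynomial of total degree at most `d - 1`. -/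
theorem L_annihilates_deg_le_d_sub_one (d : ℕ) (hd : 3 ≤ d)
    (p : MvPolynomial (Fin d) ℝ) (hp : p.totalDegree ≤ d - 1) :
    ∑ j ∈ Finset.Icc 1 d, (-1 : ℝ) ^ (d - j) * (j : ℝ) ^ (d - 1) *
        ∑ s ∈ Finset.univ.powersetCard j,
          MvPolynomial.eval (fun i => if i ∈ s then 1 / (j : ℝ) else 0) p = 0 := by
  have hswap : ∑ j ∈ Finset.Icc 1 d, (-1 : ℝ) ^ (d - j) * (j : ℝ) ^ (d - 1) *
        ∑ s ∈ Finset.univ.powersetCard j,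
          MvPolynomial.eval (fun i => if i ∈ s then 1 / (j : ℝ) else 0) p
      = ∑ α ∈ p.support, MvPolynomial.coeff α p *
          ∑ j ∈ Finset.Icc 1 d, (-1:ℝ)^(d-j) * (j:ℝ)^(d-1) *
            ∑ s ∈ Finset.univ.powersetCard j, ∏ i, (if i ∈ s then 1/(j:ℝ) else 0) ^ α i := by
    have h1 : ∀ j ∈ Finset.Icc 1 d, (-1 : ℝ) ^ (d - j) * (j : ℝ) ^ (d - 1) *
        ∑ s ∈ Finset.univ.powersetCard j,
          MvPolynomial.eval (fun i => if i ∈ s then 1 / (j : ℝ) else 0) p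
        = ∑ α ∈ p.support, MvPolynomial.coeff α p *
            ((-1:ℝ)^(d-j) * (j:ℝ)^(d-1) *
              ∑ s ∈ Finset.univ.powersetCard j, ∏ i, (if i ∈ s then 1/(j:ℝ) else 0) ^ α i) := by
      intro j _
      rw [Finset.sum_congr rfl fun s _ => MvPolynomial.eval_eq' _ p, Finset.sum_comm,
        Finset.mul_sum]
      refine Finset.sum_congr rfl fun α _ => ?_
      rw [← Finset.mul_sum]
      ring
    rw [Finset.sum_congr rfl h1, Finset.sum_comm]
    refine Finset.sum_congr rfl fun α _ => ?_
    rw [Finset.mul_sum]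
  rw [hswap]
  refine Finset.sum_eq_zero fun α hα => ?_
  rw [monomial_sum_zero d hd α (le_trans (MvPolynomial.le_totalDegree hα) hp), mul_zero]
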